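/- Let t ≥ 0 and nu > 0 be real numbers with t^2 - 4*nu^2 < 0. Then the set of quaternion roots of G(x) = x^2 - t*x + nu^2 equals the congruency class of the complex number theta = (t + sqrt(4*nu^2 - t^2)*i)/2. -/

import Mathlib

open Quaternion

theorem roots_real_quadratic_eq_congruency_class (t ν : ℝ)
    (ht : 0 ≤ t) (hν : 0 < ν) (hdisc : t ^ 2 - 4 * ν ^ 2 < 0)
    (θ : ℍ[ℝ]) (hθ : θ = ⟨t / 2, Real.sqrt (4 * ν ^ 2 - t ^ 2) / 2, 0, 0⟩) :
    {x : ℍ[ℝ] | x ^ 2 - (t : ℍ[ℝ]) * x + ((ν ^ 2 : ℝ) : ℍ[ℝ]) = 0} =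
      {x : ℍ[ℝ] | ∃ w : ℍ[ℝ], w ≠ 0 ∧ x = w * θ * w⁻¹} := by
  have hs : Real.sqrt (4 * (ν * ν) - t * t) * Real.sqrt (4 * (ν * ν) - t * t)
      = 4 * (ν * ν) - t * t := Real.mul_self_sqrt (by nlinarith)
  have hθroot : θ ^ 2 - (t : ℍ[ℝ]) * θ + ((ν ^ 2 : ℝ) : ℍ[ℝ]) = 0 := by
    obtain ⟨h1, h2, h3, h4⟩ : θ.re = t / 2 ∧ θ.imI = Real.sqrt (4 * ν ^ 2 - t ^ 2) / 2 ∧ θ.imJ = 0 ∧ θ.imK = 0 := by subst hθ; exact ⟨rfl, rfl, rfl, rfl⟩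
    ext <;> simp [pow_two, h1, h2, h3, h4] <;> nlinarith [hs]
  ext x
  simp only [Set.mem_setOf_eq]
  constructor
  · intro hx
    by_cases hw : x + θ - (t : ℍ[ℝ]) = 0
    · -- x = star θ; conjugate by j
      have hxval : x = (t : ℍ[ℝ]) - θ := by
        have := hw; linear_combination (norm := abel) hw
      obtain ⟨j, hjdef⟩ : ∃ j : ℍ[ℝ], j = ⟨0, 0, 1, 0⟩ := ⟨_, rfl⟩
      have hj : j ≠ 0 := by
        rw [hjdef]; intro h
        have := congrArg QuaternionAlgebra.imJ h
        simp at this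
      refine ⟨j, hj, ?_⟩
      have key : x * j = j * θ := by
        obtain ⟨h1, h2, h3, h4⟩ : θ.re = t / 2 ∧ θ.imI = Real.sqrt (4 * ν ^ 2 - t ^ 2) / 2 ∧ θ.imJ = 0 ∧ θ.imK = 0 := by subst hθ; exact ⟨rfl, rfl, rfl, rfl⟩
        obtain ⟨g1, g2, g3, g4⟩ : j.re = 0 ∧ j.imI = 0 ∧ j.imJ = 1 ∧ j.imK = 0 := by subst hjdef; exact ⟨rfl, rfl, rfl, rfl⟩
        rw [hxval]; ext <;> simp [h1, h2, h3, h4, g1, g2, g3, g4] <;> ring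
      calc x = x * j * j⁻¹ := by rw [mul_assoc, mul_inv_cancel₀ hj, mul_one]
        _ = j * θ * j⁻¹ := by rw [key]
    · refine ⟨x + θ - (t : ℍ[ℝ]), hw, ?_⟩
      have ct : (t : ℍ[ℝ]) * x = x * (t : ℍ[ℝ]) := (Quaternion.coe_commute t x).eq
      have key : x * (x + θ - (t : ℍ[ℝ])) = (x + θ - (t : ℍ[ℝ])) * θ := by
        rw [ct] at hx
        have e1 : x * (x + θ - (t : ℍ[ℝ]))
            = (x ^ 2 - x * (t : ℍ[ℝ]) + ((ν ^ 2 : ℝ) : ℍ[ℝ])) + x * θ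
              - ((ν ^ 2 : ℝ) : ℍ[ℝ]) := by
          noncomm_ring
        have e2 : (x + θ - (t : ℍ[ℝ])) * θ
            = (θ ^ 2 - (t : ℍ[ℝ]) * θ + ((ν ^ 2 : ℝ) : ℍ[ℝ])) + x * θ
              - ((ν ^ 2 : ℝ) : ℍ[ℝ]) := by noncomm_ring
        rw [e1, e2, hx, hθroot]
      calc x = x * (x + θ - (t : ℍ[ℝ])) * (x + θ - (t : ℍ[ℝ]))⁻¹ := by
              rw [mul_assoc, mul_inv_cancel₀ hw, mul_one]
        _ = (x + θ - (t : ℍ[ℝ])) * θ * (x + θ - (t : ℍ[ℝ]))⁻¹ := by rw [key]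
  · rintro ⟨w, hw, rfl⟩
    have h1 : (w * θ * w⁻¹) ^ 2 = w * θ ^ 2 * w⁻¹ := by
      rw [pow_two, pow_two]
      simp only [mul_assoc]
      rw [inv_mul_cancel_left₀ hw]
    have h2 : (t : ℍ[ℝ]) * (w * θ * w⁻¹) = w * ((t : ℍ[ℝ]) * θ) * w⁻¹ := by
      rw [← mul_assoc, ← mul_assoc, (Quaternion.coe_commute t w).eq, mul_assoc w]
    have h3 : ((ν ^ 2 : ℝ) : ℍ[ℝ]) = w * ((ν ^ 2 : ℝ) : ℍ[ℝ]) * w⁻¹ := by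
      rw [(Quaternion.coe_commute (ν ^ 2) w).eq.symm, mul_assoc, mul_inv_cancel₀ hw, mul_one]
    rw [h1, h2]
    calc w * θ ^ 2 * w⁻¹ - w * ((t : ℍ[ℝ]) * θ) * w⁻¹ + ((ν ^ 2 : ℝ) : ℍ[ℝ])
        = w * (θ ^ 2 - (t : ℍ[ℝ]) * θ + ((ν ^ 2 : ℝ) : ℍ[ℝ])) * w⁻¹ := by
          conv_lhs => rw [h3]
          noncomm_ring
      _ = 0 := by rw [hθroot]; simp
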